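/- arXiv:2605.19372 — 4 statements merged into one kernel-verified Lean document; each statement's English description precedes it below -/
import Mathlib

section
/- Let 0 < α < n and suppose a kernel K̃_t(x,y) satisfies |K̃_t(x,y)| ≤ C ∫₀^t ∫₀^∞ (s+r)^{-n/2} e^{-A|x-y|²/(s+r)} · r^{α/2-1}/(s+r) dr ds for constants C, A > 0. Then |K̃_t(x,y)| ≤ C' |x-y|^{-(n-α)} · t/|x-y|² for all x ≠ y and t > 0, with C' independent of x, y, t. -/
open MeasureTheory Set Real

-- aux: v^(-k) * exp(-(c/v)) ≤ k^k * c^(-k)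
lemma ker_aux (k c v : ℝ) (hk : 0 < k) (hc : 0 < c) (hv : 0 < v) :
    v ^ (-k) * Real.exp (-(c / v)) ≤ k ^ k * c ^ (-k) := by
  have hz : 0 < c / (k * v) := by positivity
  have h1 : (c / (k * v)) ^ k ≤ Real.exp (c / v) := by
    rw [Real.rpow_def_of_pos hz]
    apply Real.exp_le_exp.2
    have hlog : Real.log (c / (k * v)) ≤ c / (k * v) :=
      (Real.log_le_sub_one_of_pos hz).trans (by linarith)
    calc Real.log (c / (k * v)) * k ≤ (c / (k * v)) * k := by
          exact mul_le_mul_of_nonneg_right hlog hk.le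
      _ = c / v := by field_simp
  have h2 : Real.exp (-(c / v)) ≤ ((c / (k * v)) ^ k)⁻¹ := by
    rw [Real.exp_neg]
    exact inv_anti₀ (Real.rpow_pos_of_pos hz k) h1
  calc v ^ (-k) * Real.exp (-(c / v)) ≤ v ^ (-k) * ((c / (k * v)) ^ k)⁻¹ :=
        mul_le_mul_of_nonneg_left h2 (Real.rpow_nonneg hv.le _)
    _ = k ^ k * c ^ (-k) := by
        rw [← Real.inv_rpow hz.le, inv_div, Real.rpow_neg hv.le, Real.rpow_neg hc.le,
          Real.div_rpow (by positivity) hc.le, Real.mul_rpow hk.le hv.le]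
        field_simp

theorem stmt_10 (n : ℕ) (hn : 1 ≤ n) (α C A : ℝ) (hα : 0 < α) (hαn : α < n)
    (hC : 0 < C) (hA : 0 < A)
    (K : ℝ → EuclideanSpace ℝ (Fin n) → EuclideanSpace ℝ (Fin n) → ℝ)
    (hK : ∀ t > (0 : ℝ), ∀ x y, |K t x y| ≤
      C * ∫ s in Ioc (0 : ℝ) t, ∫ u in Ioi (0 : ℝ),
        (s + u) ^ (-(n : ℝ) / 2) * Real.exp (-A * ‖x - y‖ ^ 2 / (s + u)) *
          (u ^ (α / 2 - 1) / (s + u))) :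
    ∃ C' > (0 : ℝ), ∀ t > (0 : ℝ), ∀ x y : EuclideanSpace ℝ (Fin n), x ≠ y →
      |K t x y| ≤ C' * ‖x - y‖ ^ (-((n : ℝ) - α)) * (t / ‖x - y‖ ^ 2) := by
  set k : ℝ := (n : ℝ) / 2 + 1 with hkdef
  have hk : 0 < k := by positivity
  have hkα : α / 2 < k := by rw [hkdef]; linarith
  set D : ℝ := k ^ k * (2 / α) + 1 / (k - α / 2) with hDdef
  have hD : 0 < D := by
    apply add_pos
    · exact mul_pos (Real.rpow_pos_of_pos hk k) (by positivity)
    · exact div_pos one_pos (by linarith)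
  have hexp1 : (-1 : ℝ) < α / 2 - 1 := by linarith
  have hexp2 : α / 2 - 1 - k < -1 := by linarith
  refine ⟨C * D * A ^ (α / 2 - k), by positivity, ?_⟩
  intro t ht x y hxy
  set R : ℝ := ‖x - y‖ with hRdef
  have hR : 0 < R := by
    rw [hRdef]
    exact norm_sub_pos_iff.mpr hxy
  set c : ℝ := A * R ^ 2 with hcdef
  have hc : 0 < c := by positivity
  set g : ℝ → ℝ := fun u => if u ≤ c then k ^ k * c ^ (-k) * u ^ (α / 2 - 1)
    else u ^ (α / 2 - 1 - k) with hgdef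
  have hg1 : IntegrableOn g (Ioc (0 : ℝ) c) := by
    refine IntegrableOn.congr_fun ?_ (fun u hu => (if_pos hu.2).symm) measurableSet_Ioc
    have h1 : IntervalIntegrable (fun u : ℝ => u ^ (α / 2 - 1)) volume 0 c :=
      intervalIntegral.intervalIntegrable_rpow' hexp1
    have h2 := h1.const_mul (k ^ k * c ^ (-k))
    rw [intervalIntegrable_iff_integrableOn_Ioc_of_le hc.le] at h2
    exact h2
  have hg2 : IntegrableOn g (Ioi c) := by
    exact (integrableOn_Ioi_rpow_of_lt hexp2 hc).congr_fun
      (fun u hu => (if_neg (not_le.2 hu)).symm) measurableSet_Ioi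
  have hunion : Ioc (0 : ℝ) c ∪ Ioi c = Ioi (0 : ℝ) := Ioc_union_Ioi_eq_Ioi hc.le
  have hg_int : IntegrableOn g (Ioi (0 : ℝ)) := by
    rw [← hunion]; exact hg1.union hg2
  have hg_val : ∫ u in Ioi (0 : ℝ), g u = D * c ^ (α / 2 - k) := by
    rw [← hunion, setIntegral_union (Ioc_disjoint_Ioi le_rfl) measurableSet_Ioi hg1 hg2]
    have e1 : ∫ u in Ioc (0 : ℝ) c, g u = k ^ k * c ^ (-k) * (c ^ (α / 2) * (2 / α)) := by
      rw [setIntegral_congr_fun measurableSet_Ioc (fun u hu => if_pos hu.2),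
        integral_const_mul _ _, ← intervalIntegral.integral_of_le hc.le,
        integral_rpow (Or.inl hexp1)]
      rw [show α / 2 - 1 + 1 = α / 2 by ring, Real.zero_rpow (by linarith), sub_zero]
      rw [div_eq_mul_inv, inv_div α 2]
    have e2 : ∫ u in Ioi c, g u = c ^ (α / 2 - k) * (1 / (k - α / 2)) := by
      rw [setIntegral_congr_fun measurableSet_Ioi (fun u hu => if_neg (not_le.2 hu)),
        integral_Ioi_rpow_of_lt hexp2 hc,
        show α / 2 - 1 - k + 1 = α / 2 - k by ring]
      rw [neg_div, div_eq_mul_inv, show (α / 2 - k)⁻¹ = -(k - α / 2)⁻¹ by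
        rw [show α / 2 - k = -(k - α / 2) by ring]; exact (neg_inv).symm]
      rw [one_div]; ring
    rw [e1, e2, show c ^ (α / 2 - k) = c ^ (α / 2) * c ^ (-k) by
      rw [← Real.rpow_add hc]; ring_nf]
    rw [hDdef]; ring
  set M : ℝ := D * c ^ (α / 2 - k) with hMdef
  have hM0 : 0 ≤ M := mul_nonneg hD.le (Real.rpow_nonneg hc.le _)
  have hinner : ∀ s ∈ Ioc (0 : ℝ) t,
      ‖∫ u in Ioi (0 : ℝ), (s + u) ^ (-(n : ℝ) / 2) * Real.exp (-A * R ^ 2 / (s + u)) *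
        (u ^ (α / 2 - 1) / (s + u))‖ ≤ M := by
    intro s hs
    have hs0 : 0 < s := hs.1
    have hnn : ∀ u ∈ Ioi (0 : ℝ), 0 ≤ (s + u) ^ (-(n : ℝ) / 2) *
        Real.exp (-A * R ^ 2 / (s + u)) * (u ^ (α / 2 - 1) / (s + u)) := by
      intro u hu
      have hu0 : (0 : ℝ) < u := hu
      exact mul_nonneg (mul_nonneg (Real.rpow_nonneg (by linarith) _) (Real.exp_nonneg _))
        (div_nonneg (Real.rpow_nonneg hu0.le _) (by linarith))
    have hnonneg := setIntegral_nonneg (μ := volume) measurableSet_Ioi hnn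
    rw [Real.norm_eq_abs, abs_of_nonneg hnonneg]
    have hle : (∫ u in Ioi (0 : ℝ), (s + u) ^ (-(n : ℝ) / 2) *
        Real.exp (-A * R ^ 2 / (s + u)) * (u ^ (α / 2 - 1) / (s + u))) ≤
        ∫ u in Ioi (0 : ℝ), g u := by
      apply integral_mono_of_nonneg
      · filter_upwards [ae_restrict_mem measurableSet_Ioi] with u hu
        exact hnn u hu
      · exact hg_int
      · filter_upwards [ae_restrict_mem measurableSet_Ioi] with u hu
        have hu0 : (0 : ℝ) < u := hu
        have hv : (0 : ℝ) < s + u := by linarith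
        have hvk : (s + u) ^ (-(n : ℝ) / 2) * Real.exp (-A * R ^ 2 / (s + u)) *
            (u ^ (α / 2 - 1) / (s + u)) =
            u ^ (α / 2 - 1) * ((s + u) ^ (-k) * Real.exp (-(c / (s + u)))) := by
          rw [show -A * R ^ 2 / (s + u) = -(c / (s + u)) by rw [hcdef]; ring]
          rw [show (s + u : ℝ) ^ (-k) = (s + u) ^ (-(n : ℝ) / 2) * (s + u)⁻¹ by
            rw [show -k = -(n : ℝ) / 2 + -1 by rw [hkdef]; ring, Real.rpow_add hv,
              Real.rpow_neg_one]]
          ring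
        rw [hvk]
        by_cases huc : u ≤ c
        · simp only [hgdef, if_pos huc]
          calc u ^ (α / 2 - 1) * ((s + u) ^ (-k) * Real.exp (-(c / (s + u))))
              ≤ u ^ (α / 2 - 1) * (k ^ k * c ^ (-k)) :=
                mul_le_mul_of_nonneg_left (ker_aux k c (s + u) hk hc hv)
                  (Real.rpow_nonneg hu0.le _)
            _ = k ^ k * c ^ (-k) * u ^ (α / 2 - 1) := by ring
        · simp only [hgdef, if_neg huc]
          push_neg at huc
          have h1 : (s + u) ^ (-k) * Real.exp (-(c / (s + u))) ≤ u ^ (-k) := by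
            calc (s + u) ^ (-k) * Real.exp (-(c / (s + u)))
                ≤ (s + u) ^ (-k) * 1 := by
                  apply mul_le_mul_of_nonneg_left _ (Real.rpow_nonneg hv.le _)
                  exact Real.exp_le_one_iff.2 (neg_nonpos.2 (div_nonneg hc.le hv.le))
              _ = (s + u) ^ (-k) := mul_one _
              _ ≤ u ^ (-k) :=
                  Real.rpow_le_rpow_of_nonpos hu0 (by linarith) (neg_nonpos.2 hk.le)
          calc u ^ (α / 2 - 1) * ((s + u) ^ (-k) * Real.exp (-(c / (s + u))))
              ≤ u ^ (α / 2 - 1) * u ^ (-k) :=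
                mul_le_mul_of_nonneg_left h1 (Real.rpow_nonneg hu0.le _)
            _ = u ^ (α / 2 - 1 - k) := by rw [← Real.rpow_add hu0]; ring_nf
    rw [hg_val] at hle
    exact hle
  have houter : ‖∫ s in Ioc (0 : ℝ) t, ∫ u in Ioi (0 : ℝ),
      (s + u) ^ (-(n : ℝ) / 2) * Real.exp (-A * R ^ 2 / (s + u)) *
        (u ^ (α / 2 - 1) / (s + u))‖ ≤ M * (volume (Ioc (0 : ℝ) t)).toReal :=
    norm_setIntegral_le_of_norm_le_const
      (by rw [Real.volume_Ioc]; exact ENNReal.ofReal_lt_top)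
      hinner
  rw [Real.volume_Ioc, ENNReal.toReal_ofReal (by linarith), sub_zero] at houter
  have hbound := hK t ht x y
  rw [← hRdef] at hbound
  have key : c ^ (α / 2 - k) = A ^ (α / 2 - k) * (R ^ (-((n : ℝ) - α)) * (R ^ 2)⁻¹) := by
    rw [hcdef, Real.mul_rpow hA.le (by positivity)]
    congr 1
    rw [← Real.rpow_natCast R 2, ← Real.rpow_mul hR.le,
      show ((2 : ℕ) : ℝ) * (α / 2 - k) = -((n : ℝ) - α) + -((2 : ℕ) : ℝ) by
        rw [hkdef]; push_cast; ring,
      Real.rpow_add hR]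
    congr 1
    rw [Real.rpow_neg hR.le, Real.rpow_natCast]
  calc |K t x y| ≤ C * ∫ s in Ioc (0 : ℝ) t, ∫ u in Ioi (0 : ℝ),
        (s + u) ^ (-(n : ℝ) / 2) * Real.exp (-A * R ^ 2 / (s + u)) *
          (u ^ (α / 2 - 1) / (s + u)) := hbound
    _ ≤ C * (M * t) := by
        apply mul_le_mul_of_nonneg_left _ hC.le
        exact (le_abs_self _).trans (by rw [← Real.norm_eq_abs]; exact houter)
    _ = C * D * A ^ (α / 2 - k) * R ^ (-((n : ℝ) - α)) * (t / R ^ 2) := by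
        rw [hMdef, key, div_eq_mul_inv]; ring
end

section
/- Let 0 < α < n, 1 ≤ p < n/α, λ = n - αp, and f ∈ M^{p,λ}(ℝⁿ). For a ball B = B(x₀, r), define f₂ = f·χ_{(2B)^c}. Suppose g : ℝⁿ → ℝ satisfies |g(x)| ≤ C ∫_{(2B)^c} |x-y|^{-(n-α)} (r²/|x-y|²) |f(y)| dy for all x ∈ B. Then (1/m(B)) ∫_B |g(x)| dx ≤ C' ‖f‖_{M^{p,λ}}, with C' depending only on n, p, α, C. -/
open MeasureTheory Set Real Metric

lemma aux_holder {X : Type*} [MeasurableSpace X] (μ : Measure X) [IsFiniteMeasure μ]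
    {F : X → ℝ} {p : ℝ} (hp : 1 ≤ p) (hF0 : ∀ x, 0 ≤ F x)
    (hFm : AEStronglyMeasurable F μ) (hFp : Integrable (fun x => F x ^ p) μ) :
    ∫ x, F x ∂μ ≤ (∫ x, F x ^ p ∂μ) ^ (1/p) * (μ univ).toReal ^ (1 - 1/p) := by
  rcases eq_or_lt_of_le hp with hp1 | hp1
  · simp [← hp1, Real.rpow_one]
  · have hpq : p.HolderConjugate (p / (p - 1)) := Real.HolderConjugate.conjExponent hp1
    have hFLp : MemLp F (ENNReal.ofReal p) μ := by
      rw [← memLp_norm_rpow_iff (q := ENNReal.ofReal p) hFm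
        (by simp [hpq.pos]) (by simp)]
      rw [ENNReal.div_self (by simp [hpq.pos]) (by simp), ENNReal.toReal_ofReal hpq.nonneg,
        memLp_one_iff_integrable]
      refine hFp.congr (Filter.Eventually.of_forall fun x => ?_)
      simp only []
      rw [Real.norm_of_nonneg (hF0 x)]
    have h1 : MemLp (fun _ : X => (1:ℝ)) (ENNReal.ofReal (p/(p-1))) μ := memLp_const 1
    have := integral_mul_le_Lp_mul_Lq_of_nonneg hpq (Filter.Eventually.of_forall hF0)
      (Filter.Eventually.of_forall fun _ => zero_le_one) hFLp h1
    simp only [mul_one, Real.one_rpow, integral_const, smul_eq_mul] at this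
    have hq : 1 / (p / (p-1)) = 1 - 1/p := by
      rw [one_div_div]
      field_simp
    rwa [hq] at this

lemma aux_vol (n : ℕ) (hn : 1 ≤ n) (x₀ : EuclideanSpace ℝ (Fin n)) {R : ℝ} (hR : 0 ≤ R) :
    (volume (ball x₀ R)).toReal
      = R ^ n * (volume (ball (0 : EuclideanSpace ℝ (Fin n)) 1)).toReal := by
  haveI : Nonempty (Fin n) := Fin.pos_iff_nonempty.mp hn
  rw [Measure.addHaar_ball (μ := volume) x₀ hR, ENNReal.toReal_mul,
    ENNReal.toReal_ofReal (pow_nonneg hR _), finrank_euclideanSpace_fin]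

lemma aux_vol_pos (n : ℕ) (hn : 1 ≤ n) (x₀ : EuclideanSpace ℝ (Fin n)) {R : ℝ} (hR : 0 < R) :
    0 < (volume (ball x₀ R)).toReal :=
  ENNReal.toReal_pos (measure_ball_pos volume x₀ hR).ne' measure_ball_lt_top.ne

lemma aux_cover {X : Type*} [PseudoMetricSpace X] (x₀ : X) {r : ℝ} (hr : 0 < r) :
    (ball x₀ (2*r))ᶜ = ⋃ k : ℕ, (ball x₀ (2^(k+2)*r) \ ball x₀ (2^(k+1)*r)) := by
  ext y
  simp only [mem_compl_iff, mem_ball, not_lt, mem_iUnion, mem_diff]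
  constructor
  · intro hd
    have hS : ∃ m : ℕ, dist y x₀ < 2^(m+1)*r := by
      obtain ⟨m, hm⟩ := pow_unbounded_of_one_lt (dist y x₀ / r) (one_lt_two (α := ℝ))
      have h1 : dist y x₀ < 2^m * r := (div_lt_iff₀ hr).mp hm
      have h2 : (2:ℝ)^m ≤ 2^(m+1) := by
        apply pow_le_pow_right₀ (by norm_num) (Nat.le_succ m)
      exact ⟨m, by nlinarith⟩
    classical
    have hm₀spec : dist y x₀ < 2^(Nat.find hS+1)*r := Nat.find_spec hS
    set m₀ := Nat.find hS with hm₀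
    have hm₀pos : 1 ≤ m₀ := by
      by_contra h
      push_neg at h
      interval_cases m₀
      · norm_num at hm₀spec; linarith
    have e1 : m₀ - 1 + 2 = m₀ + 1 := by omega
    have e2 : m₀ - 1 + 1 = m₀ := by omega
    refine ⟨m₀ - 1, by rw [e1]; exact hm₀spec, ?_⟩
    rw [e2]
    have := Nat.find_min hS (m := m₀ - 1) (by omega)
    rw [e2] at this
    linarith
  · rintro ⟨k, -, hk⟩
    calc 2*r = 2^1*r := by norm_num
    _ ≤ 2^(k+1)*r := by
        gcongr
        · linarith
        · omega
    _ ≤ dist y x₀ := hk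

lemma aux_disj {X : Type*} [PseudoMetricSpace X] (x₀ : X) {r : ℝ} (hr : 0 < r) :
    Pairwise (Function.onFun Disjoint fun k : ℕ => ball x₀ (2^(k+2)*r) \ ball x₀ (2^(k+1)*r)) := by
  have key : ∀ i j : ℕ, i < j →
      Disjoint (ball x₀ (2^(i+2)*r) \ ball x₀ (2^(i+1)*r))
        (ball x₀ (2^(j+2)*r) \ ball x₀ (2^(j+1)*r)) := by
    intro i j hij
    refine Disjoint.mono_left ?_ (disjoint_sdiff_right (s := ball x₀ (2^(j+1)*r)))
    refine (diff_subset).trans (ball_subset_ball ?_)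
    have : (2:ℝ)^(i+2) ≤ 2^(j+1) := by
      apply pow_le_pow_right₀ (by norm_num)
      omega
    nlinarith
  intro i j hij
  rcases lt_or_gt_of_ne hij with h | h
  · exact key i j h
  · exact (key j i h).symm



theorem stmt_11 (n : ℕ) (hn : 1 ≤ n) (α p lam C : ℝ) (hα : 0 < α) (hαn : α < n)
    (hp1 : 1 ≤ p) (hp2 : p < n / α) (hlam : lam = n - α * p) (hC : 0 < C) :
    ∃ C' > (0 : ℝ), ∀ (f g : EuclideanSpace ℝ (Fin n) → ℝ) (M : ℝ),
      (∀ (x₀ : EuclideanSpace ℝ (Fin n)) (r : ℝ), 0 < r →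
        IntegrableOn (fun y => |f y| ^ p) (ball x₀ r) volume ∧
        (volume (ball x₀ r)).toReal ^ (-(lam / (p * n))) *
          (∫ y in ball x₀ r, |f y| ^ p) ^ (1 / p) ≤ M) →
      ∀ (x₀ : EuclideanSpace ℝ (Fin n)) (r : ℝ), 0 < r →
        (∀ x ∈ ball x₀ r, |g x| ≤
          C * ∫ y in (ball x₀ (2 * r))ᶜ,
            ‖x - y‖ ^ (-((n : ℝ) - α)) * (r ^ 2 / ‖x - y‖ ^ 2) * |f y|) →
        (volume (ball x₀ r)).toReal⁻¹ * ∫ x in ball x₀ r, |g x| ≤ C' * M := by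
  have hn0 : (0:ℝ) < n := by exact_mod_cast Nat.pos_of_ne_zero (by omega)
  have hp0 : 0 < p := lt_of_lt_of_le one_pos hp1
  set V := (volume (ball (0 : EuclideanSpace ℝ (Fin n)) 1)).toReal with hVdef
  have hVpos : 0 < V := aux_vol_pos n hn 0 one_pos
  set β := 1 - α/(n:ℝ) with hβ
  have hβpos : 0 < β := by
    rw [hβ]
    have : α/(n:ℝ) < 1 := (div_lt_one hn0).2 hαn
    linarith
  refine ⟨C * (V ^ β * 4 ^ ((n:ℝ) - α)) * (4/3), by positivity, ?_⟩
  intro f g M hM x₀ r hr hg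
  have hmB : 0 < (volume (ball x₀ r)).toReal := aux_vol_pos n hn x₀ hr
  have hM0 : 0 ≤ M := by
    refine le_trans ?_ (hM x₀ r hr).2
    have h1 : 0 ≤ (∫ y in ball x₀ r, |f y| ^ p) :=
      integral_nonneg fun y => Real.rpow_nonneg (abs_nonneg _) _
    exact mul_nonneg (Real.rpow_nonneg ENNReal.toReal_nonneg _) (Real.rpow_nonneg h1 _)
  -- global measurability of |f|^p
  have hmeas_p : AEStronglyMeasurable (fun y => |f y| ^ p) volume := by
    have huniv : (univ : Set (EuclideanSpace ℝ (Fin n)))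
        = ⋃ k : ℕ, ball (0 : EuclideanSpace ℝ (Fin n)) (k+1) :=
      (iUnion_ball_nat_succ _).symm
    rw [← Measure.restrict_univ (μ := (volume : Measure (EuclideanSpace ℝ (Fin n)))), huniv,
      aestronglyMeasurable_iUnion_iff]
    intro k
    exact (hM 0 (k+1) (by positivity)).1.aestronglyMeasurable
  have hmeas_f : AEStronglyMeasurable (fun y => |f y|) volume := by
    have h2 : AEMeasurable (fun y => (|f y| ^ p) ^ (1/p)) volume :=
      hmeas_p.aemeasurable.pow_const (1/p)
    have heq : (fun y => |f y|) = fun y => (|f y| ^ p) ^ (1/p) := by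
      funext y
      rw [← Real.rpow_mul (abs_nonneg _), mul_one_div, div_self hp0.ne', Real.rpow_one]
    rw [heq]
    exact h2.aestronglyMeasurable
  -- local integrability of |f|
  have hfint : ∀ (c : EuclideanSpace ℝ (Fin n)) (R : ℝ), 0 < R →
      IntegrableOn (fun y => |f y|) (ball c R) volume := by
    intro c R hR
    have hint1 : IntegrableOn (fun y => 1 + |f y| ^ p) (ball c R) volume :=
      (integrableOn_const measure_ball_lt_top.ne).add (hM c R hR).1
    refine hint1.mono' hmeas_f.restrict ?_
    refine Filter.Eventually.of_forall fun y => ?_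
    rw [Real.norm_eq_abs, abs_abs]
    rcases le_total (|f y|) 1 with h | h
    · have h0 : 0 ≤ |f y| ^ p := Real.rpow_nonneg (abs_nonneg _) _
      linarith
    · have h2 : |f y| ^ (1:ℝ) ≤ |f y| ^ p := Real.rpow_le_rpow_of_exponent_le h hp1
      rw [Real.rpow_one] at h2
      linarith
  -- Hölder + Morrey
  have key1 : ∀ (c : EuclideanSpace ℝ (Fin n)) (R : ℝ), 0 < R →
      ∫ y in ball c R, |f y| ≤ M * ((volume (ball c R)).toReal) ^ β := by
    intro c R hR
    haveI hfin : IsFiniteMeasure (volume.restrict (ball c R)) :=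
      ⟨by rw [Measure.restrict_apply_univ]; exact measure_ball_lt_top⟩
    have hmBc : 0 < (volume (ball c R)).toReal := aux_vol_pos n hn c hR
    have hH := aux_holder (volume.restrict (ball c R)) hp1 (fun y => abs_nonneg (f y))
      hmeas_f.restrict (hM c R hR).1
    rw [Measure.restrict_apply_univ] at hH
    have hMor := (hM c R hR).2
    have hA0 : 0 ≤ (∫ y in ball c R, |f y| ^ p) ^ (1/p) :=
      Real.rpow_nonneg (integral_nonneg fun y => Real.rpow_nonneg (abs_nonneg _) _) _
    have hMor' : (∫ y in ball c R, |f y| ^ p) ^ (1/p)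
        ≤ M * ((volume (ball c R)).toReal) ^ (lam/(p*(n:ℝ))) := by
      have h1 := mul_le_mul_of_nonneg_left hMor
        (Real.rpow_nonneg (x := (volume (ball c R)).toReal) hmBc.le (lam/(p*(n:ℝ))))
      rwa [← mul_assoc, ← Real.rpow_add hmBc, add_neg_cancel, Real.rpow_zero, one_mul,
        mul_comm] at h1
    calc ∫ y in ball c R, |f y|
        ≤ (∫ y in ball c R, |f y| ^ p) ^ (1/p) * ((volume (ball c R)).toReal) ^ (1 - 1/p) := hH
      _ ≤ (M * ((volume (ball c R)).toReal) ^ (lam/(p*(n:ℝ))))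
          * ((volume (ball c R)).toReal) ^ (1 - 1/p) :=
          mul_le_mul_of_nonneg_right hMor' (Real.rpow_nonneg hmBc.le _)
      _ = M * ((volume (ball c R)).toReal) ^ β := by
          rw [mul_assoc, ← Real.rpow_add hmBc]
          congr 2
          rw [hβ, hlam]
          field_simp
          ring
  -- the per-point kernel bound
  have key2 : ∀ x ∈ ball x₀ r,
      (∫ y in (ball x₀ (2*r))ᶜ,
        ‖x - y‖ ^ (-((n:ℝ) - α)) * (r^2/‖x - y‖^2) * |f y|)
        ≤ M * (V ^ β * 4 ^ ((n:ℝ) - α)) * (4/3) := by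
    intro x hx
    set h : EuclideanSpace ℝ (Fin n) → ℝ :=
      fun y => ‖x - y‖ ^ (-((n:ℝ) - α)) * (r^2/‖x - y‖^2) * |f y| with hhdef
    set A : ℕ → Set (EuclideanSpace ℝ (Fin n)) :=
      fun k => ball x₀ (2^(k+2)*r) \ ball x₀ (2^(k+1)*r) with hAdef
    have hAmeas : ∀ k, MeasurableSet (A k) := fun k =>
      measurableSet_ball.diff measurableSet_ball
    have hAdisj : Pairwise (Function.onFun Disjoint A) := aux_disj x₀ hr
    have hRHS0 : 0 ≤ M * (V ^ β * 4 ^ ((n:ℝ) - α)) * (4/3) := by positivity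
    by_cases hint : IntegrableOn h ((ball x₀ (2*r))ᶜ) volume
    · set b : ℕ → ℝ := fun k => M * (V ^ β * 4 ^ ((n:ℝ) - α)) * (1/4)^k with hbdef
      have hsum_b : Summable b :=
        (summable_geometric_of_lt_one (by norm_num) (by norm_num)).mul_left _
      have htsum_b : ∑' k, b k = M * (V ^ β * 4 ^ ((n:ℝ) - α)) * (4/3) := by
        rw [hbdef, tsum_mul_left, tsum_geometric_of_lt_one (by norm_num) (by norm_num)]
        norm_num
      rw [aux_cover x₀ hr] at hint ⊢
      rw [integral_iUnion hAmeas hAdisj hint]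
      have hsummable : Summable fun k => ∫ y in A k, h y :=
        (hasSum_integral_iUnion hAmeas hAdisj hint).summable
      refine le_trans (Summable.tsum_le_tsum ?_ hsummable hsum_b) (le_of_eq htsum_b)
      intro k
      set t : ℝ := 2^k * r with htdef
      have htpos : 0 < t := by positivity
      set ck : ℝ := t ^ (-((n:ℝ) - α)) * (r^2/t^2) with hckdef
      have hck0 : 0 ≤ ck := by positivity
      have hspos : (0:ℝ) < 2^(k+2)*r := by positivity
      have hlb : ∀ y ∈ A k, t ≤ ‖x - y‖ := by
        intro y hy
        obtain ⟨_, hy2⟩ := hy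
        rw [mem_ball, not_lt] at hy2
        have hx' : dist x x₀ < r := mem_ball.mp hx
        have htri : dist y x₀ ≤ dist y x + dist x x₀ := dist_triangle y x x₀
        have hnorm : ‖x - y‖ = dist y x := by rw [dist_comm, dist_eq_norm]
        have h2k : (1:ℝ) ≤ 2^k := one_le_pow₀ (by norm_num)
        have hps : (2:ℝ)^(k+1) = 2 * 2^k := by rw [pow_succ]; ring
        rw [hnorm, htdef]
        rw [hps] at hy2
        nlinarith
      have hker : ∀ y ∈ A k, h y ≤ ck * |f y| := by
        intro y hy
        have h1 : t ≤ ‖x - y‖ := hlb y hy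
        have h2 : ‖x - y‖ ^ (-((n:ℝ) - α)) ≤ t ^ (-((n:ℝ) - α)) :=
          Real.rpow_le_rpow_of_nonpos htpos h1 (by linarith)
        have h3 : r^2/‖x - y‖^2 ≤ r^2/t^2 :=
          div_le_div_of_nonneg_left (by positivity) (by positivity)
            (pow_le_pow_left₀ htpos.le h1 2)
        rw [hhdef, hckdef]
        exact mul_le_mul (mul_le_mul h2 h3 (by positivity) (Real.rpow_nonneg htpos.le _))
          le_rfl (abs_nonneg _) (by positivity)
      have hint_k : IntegrableOn h (A k) volume := hint.mono_set (subset_iUnion A k)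
      have hint_fk : IntegrableOn (fun y => ck * |f y|) (A k) volume :=
        IntegrableOn.mono_set ((hfint x₀ (2^(k+2)*r) hspos).const_mul ck) diff_subset
      calc ∫ y in A k, h y ≤ ∫ y in A k, ck * |f y| :=
            setIntegral_mono_on hint_k hint_fk (hAmeas k) hker
        _ = ck * ∫ y in A k, |f y| := integral_const_mul ck _
        _ ≤ ck * ∫ y in ball x₀ (2^(k+2)*r), |f y| := by
            refine mul_le_mul_of_nonneg_left ?_ hck0
            refine setIntegral_mono_set (hfint x₀ _ hspos)
              (Filter.Eventually.of_forall fun y => abs_nonneg _)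
              (HasSubset.Subset.eventuallyLE diff_subset)
        _ ≤ ck * (M * ((volume (ball x₀ (2^(k+2)*r))).toReal) ^ β) :=
            mul_le_mul_of_nonneg_left (key1 x₀ _ hspos) hck0
        _ = b k := by
            rw [aux_vol n hn x₀ hspos.le]
            have hs4 : (2:ℝ)^(k+2)*r = 4*t := by
              rw [htdef, pow_succ, pow_succ]; ring
            have h1 : (((2:ℝ)^(k+2)*r) ^ n * V) ^ β = (((2:ℝ)^(k+2)*r) ^ n) ^ β * V ^ β :=
              Real.mul_rpow (by positivity) hVpos.le
            have h2 : (((2:ℝ)^(k+2)*r) ^ n) ^ β = ((2:ℝ)^(k+2)*r) ^ ((n:ℝ)*β) := by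
              rw [← Real.rpow_natCast ((2:ℝ)^(k+2)*r) n, ← Real.rpow_mul hspos.le]
            have h3 : (n:ℝ)*β = (n:ℝ) - α := by
              rw [hβ]; field_simp
            have h4 : ((2:ℝ)^(k+2)*r) ^ ((n:ℝ) - α) = 4^((n:ℝ)-α) * t^((n:ℝ)-α) := by
              rw [hs4, Real.mul_rpow (by norm_num) htpos.le]
            have e1 : t ^ (-((n:ℝ)-α)) * t^((n:ℝ)-α) = 1 := by
              rw [← Real.rpow_add htpos]; simp
            have e2 : r^2/t^2 = (1/4:ℝ)^k := by
              have ht2 : t^2 = 4^k * r^2 := by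
                rw [htdef, mul_pow, ← pow_mul, mul_comm k 2, pow_mul]; norm_num
              rw [ht2, one_div_pow, div_eq_div_iff (by positivity) (by positivity)]
              ring
            rw [h1, h2, h3, h4, hbdef, hckdef]
            rw [e2]
            calc t ^ (-((n:ℝ)-α)) * (1/4:ℝ)^k * (M * (4^((n:ℝ)-α) * t^((n:ℝ)-α) * V ^ β))
                = (t ^ (-((n:ℝ)-α)) * t^((n:ℝ)-α)) *
                    (M * (V ^ β * 4^((n:ℝ)-α)) * (1/4:ℝ)^k) := by ring
              _ = M * (V ^ β * 4 ^ ((n:ℝ) - α)) * (1/4:ℝ)^k := by rw [e1, one_mul]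
    · rw [integral_undef hint]
      exact hRHS0
  -- conclusion
  have hgbound : ∀ x ∈ ball x₀ r,
      ‖|g x|‖ ≤ C * (M * (V ^ β * 4 ^ ((n:ℝ) - α)) * (4/3)) := by
    intro x hx
    rw [Real.norm_eq_abs, abs_abs]
    exact le_trans (hg x hx) (mul_le_mul_of_nonneg_left (key2 x hx) hC.le)
  have hbd := norm_setIntegral_le_of_norm_le_const (μ := volume)
    measure_ball_lt_top hgbound
  have hInt0 : (∫ x in ball x₀ r, |g x|) ≤
      C * (M * (V ^ β * 4 ^ ((n:ℝ) - α)) * (4/3)) * (volume (ball x₀ r)).toReal :=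
    le_trans (le_abs_self _) hbd
  calc (volume (ball x₀ r)).toReal⁻¹ * ∫ x in ball x₀ r, |g x|
      ≤ (volume (ball x₀ r)).toReal⁻¹ *
        (C * (M * (V ^ β * 4 ^ ((n:ℝ) - α)) * (4/3)) * (volume (ball x₀ r)).toReal) :=
        mul_le_mul_of_nonneg_left hInt0 (by positivity)
    _ = C * (V ^ β * 4 ^ ((n:ℝ) - α)) * (4/3) * M := by
        field_simp
end

section
/- Let 0 < α < n, 1 ≤ p < n/α, λ = n - αp, and f ∈ M^{p,λ}(ℝⁿ). For any ball B = B(x₀, r), (1/m(B)) ∫_B ∫_{2B} |f(y)| / |x-y|^{n-α} dy dx ≤ C ‖f‖_{M^{p,λ}}, with C depending only on n, p, α. -/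
open MeasureTheory Set Real Metric
lemma aux_int_le {X : Type*} [MeasurableSpace X] (μ : Measure X)
    (g : X → ℝ) (hg : ∀ x, 0 ≤ g x) :
    ∫ x, g x ∂μ ≤ (∫⁻ x, ENNReal.ofReal (g x) ∂μ).toReal := by
  by_cases h : Integrable g μ
  · rw [integral_eq_lintegral_of_nonneg_ae (ae_of_all _ hg) h.aestronglyMeasurable]
  · rw [integral_undef h]; exact ENNReal.toReal_nonneg

lemma aux_kernel (n : ℕ) (hn : 1 ≤ n) (α : ℝ) (hα : 0 < α) (hαn : α < n)
    (y : EuclideanSpace ℝ (Fin n)) (R : ℝ) (hR : 0 < R) :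
    ∫⁻ x in ball y R, ENNReal.ofReal (‖x - y‖ ^ (α - (n : ℝ))) ∂volume ≤
      ENNReal.ofReal (R ^ α * 2 ^ ((n : ℝ) - α)) * (1 - ENNReal.ofReal (2 ^ (-α)))⁻¹ *
        volume (ball (0 : EuclideanSpace ℝ (Fin n)) 1) := by
  haveI : Nontrivial (EuclideanSpace ℝ (Fin n)) := Module.nontrivial_of_finrank_pos (R := ℝ)
    (by rw [finrank_euclideanSpace_fin]; omega)
  set K := volume (ball (0 : EuclideanSpace ℝ (Fin n)) 1) with hK
  set A : ℕ → Set (EuclideanSpace ℝ (Fin n)) :=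
    fun k => closedBall y ((1/2 : ℝ)^k * R) \ ball y ((1/2 : ℝ)^(k+1) * R) with hA
  have hcover : ball y R ⊆ {y} ∪ ⋃ k, A k := by
    intro x hx
    rcases eq_or_ne x y with rfl | hxy
    · exact Or.inl rfl
    right
    have hd : 0 < dist x y := dist_pos.mpr hxy
    have hdR : dist x y < R := mem_ball.mp hx
    have hex : ∃ m : ℕ, (1/2 : ℝ)^m * R < dist x y := by
      obtain ⟨m, hm⟩ := exists_pow_lt_of_lt_one (div_pos hd hR) (by norm_num : (1/2:ℝ) < 1)
      exact ⟨m, (lt_div_iff₀ hR).mp hm⟩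
    classical
    set m := Nat.find hex with hm
    have hmlt : (1/2 : ℝ)^m * R < dist x y := Nat.find_spec hex
    have hm1 : 1 ≤ m := by
      rcases Nat.eq_zero_or_pos m with h0 | h; swap; · exact h
      exfalso; rw [h0] at hmlt; simp at hmlt; linarith
    refine mem_iUnion.mpr ⟨m - 1, ?_⟩
    have hml : ¬ ((1/2 : ℝ)^(m-1) * R < dist x y) := Nat.find_min hex (by omega)
    constructor
    · exact mem_closedBall.mpr (le_of_not_gt hml)
    · intro hmem
      have : dist x y < (1/2 : ℝ)^(m-1+1) * R := mem_ball.mp hmem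
      rw [show m - 1 + 1 = m by omega] at this
      linarith
  calc ∫⁻ x in ball y R, ENNReal.ofReal (‖x - y‖ ^ (α - (n : ℝ))) ∂volume
      ≤ ∫⁻ x in {y} ∪ ⋃ k, A k, ENNReal.ofReal (‖x - y‖ ^ (α - (n : ℝ))) ∂volume :=
        lintegral_mono_set hcover
    _ ≤ (∫⁻ x in {y}, ENNReal.ofReal (‖x - y‖ ^ (α - (n : ℝ))) ∂volume)
        + ∫⁻ x in ⋃ k, A k, ENNReal.ofReal (‖x - y‖ ^ (α - (n : ℝ))) ∂volume :=
        lintegral_union_le _ _ _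
    _ = ∫⁻ x in ⋃ k, A k, ENNReal.ofReal (‖x - y‖ ^ (α - (n : ℝ))) ∂volume := by
        rw [setLIntegral_measure_zero _ _ (measure_singleton y), zero_add]
    _ ≤ ∑' k, ∫⁻ x in A k, ENNReal.ofReal (‖x - y‖ ^ (α - (n : ℝ))) ∂volume :=
        lintegral_iUnion_le _ _
    _ ≤ ∑' k, ENNReal.ofReal (((1/2 : ℝ)^(k+1) * R) ^ (α - (n : ℝ)))
          * (ENNReal.ofReal (((1/2 : ℝ)^k * R) ^ n) * K) := by
        refine ENNReal.tsum_le_tsum fun k => ?_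
        have hmeas : MeasurableSet (A k) := measurableSet_closedBall.diff measurableSet_ball
        calc ∫⁻ x in A k, ENNReal.ofReal (‖x - y‖ ^ (α - (n : ℝ))) ∂volume
            ≤ ∫⁻ _x in A k, ENNReal.ofReal (((1/2 : ℝ)^(k+1) * R) ^ (α - (n : ℝ))) ∂volume := by
              refine setLIntegral_mono' hmeas fun x hx => ?_
              refine ENNReal.ofReal_le_ofReal ?_
              have h1 : (1/2 : ℝ)^(k+1) * R ≤ ‖x - y‖ := by
                have := hx.2
                rw [mem_ball, not_lt] at this
                simpa [dist_eq_norm] using this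
              exact Real.rpow_le_rpow_of_nonpos
                (by positivity) h1 (by push_cast; linarith)
          _ = ENNReal.ofReal (((1/2 : ℝ)^(k+1) * R) ^ (α - (n : ℝ))) * volume (A k) :=
              setLIntegral_const _ _
          _ ≤ ENNReal.ofReal (((1/2 : ℝ)^(k+1) * R) ^ (α - (n : ℝ)))
              * (ENNReal.ofReal (((1/2 : ℝ)^k * R) ^ n) * K) := by
              refine mul_le_mul_right ?_ _
              calc volume (A k) ≤ volume (closedBall y ((1/2 : ℝ)^k * R)) :=
                    measure_mono diff_subset
                _ = ENNReal.ofReal (((1/2 : ℝ)^k * R) ^ Module.finrank ℝ (EuclideanSpace ℝ (Fin n))) * K :=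
                    Measure.addHaar_closedBall _ _ (by positivity)
                _ = ENNReal.ofReal (((1/2 : ℝ)^k * R) ^ n) * K := by
                    rw [finrank_euclideanSpace_fin]
    _ ≤ ENNReal.ofReal (R ^ α * 2 ^ ((n : ℝ) - α)) * (1 - ENNReal.ofReal (2 ^ (-α)))⁻¹ * K := by
        have hterm : ∀ k : ℕ, ((1/2 : ℝ)^(k+1) * R) ^ (α - (n : ℝ)) * ((1/2 : ℝ)^k * R) ^ n
            = (R ^ α * 2 ^ ((n : ℝ) - α)) * ((2 : ℝ) ^ (-α)) ^ k := by
          intro k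
          have hhalf : ∀ j : ℕ, ((1/2 : ℝ))^j = (2 : ℝ) ^ (-(j : ℝ)) := by
            intro j
            rw [Real.rpow_neg (by norm_num), Real.rpow_natCast 2 j]
            simp [one_div, inv_pow]
          have h2 : (0:ℝ) < 2 := by norm_num
          rw [show (((1/2:ℝ))^k * R) ^ n = (((1/2:ℝ))^k * R) ^ ((n : ℕ) : ℝ) from
            (Real.rpow_natCast _ n).symm]
          rw [hhalf (k+1), hhalf k]
          rw [Real.mul_rpow (by positivity) hR.le, Real.mul_rpow (by positivity) hR.le]
          rw [← Real.rpow_natCast ((2:ℝ) ^ (-α)) k, ← Real.rpow_mul h2.le,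
            ← Real.rpow_mul h2.le, ← Real.rpow_mul h2.le]
          rw [mul_mul_mul_comm, ← Real.rpow_add h2, ← Real.rpow_add hR, mul_assoc,
            ← Real.rpow_add h2]
          rw [show α - (n:ℝ) + (n:ℝ) = α from by ring]
          push_cast
          rw [show -((k:ℝ)+1) * (α - (n:ℝ)) + -(k:ℝ) * (n:ℝ) = (n:ℝ) - α + -α * (k:ℝ) from by ring]
          exact mul_comm _ _
        calc (∑' k, ENNReal.ofReal (((1/2 : ℝ)^(k+1) * R) ^ (α - (n : ℝ)))
              * (ENNReal.ofReal (((1/2 : ℝ)^k * R) ^ n) * K))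
            = ∑' k, (ENNReal.ofReal (R ^ α * 2 ^ ((n : ℝ) - α))
                * ENNReal.ofReal ((2:ℝ) ^ (-α)) ^ k) * K := by
              congr 1; funext k
              rw [← mul_assoc, ← ENNReal.ofReal_mul (by positivity), hterm k,
                ENNReal.ofReal_mul (by positivity), ENNReal.ofReal_pow (by positivity)]
          _ = ENNReal.ofReal (R ^ α * 2 ^ ((n : ℝ) - α))
              * (∑' k, ENNReal.ofReal ((2:ℝ) ^ (-α)) ^ k) * K := by
              rw [ENNReal.tsum_mul_right, ENNReal.tsum_mul_left]
          _ = ENNReal.ofReal (R ^ α * 2 ^ ((n : ℝ) - α))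
              * (1 - ENNReal.ofReal ((2:ℝ) ^ (-α)))⁻¹ * K := by
              rw [ENNReal.tsum_geometric]
          _ ≤ _ := le_rfl

theorem stmt_12 (n : ℕ) (hn : 1 ≤ n) (α p lam : ℝ) (hα : 0 < α) (hαn : α < n)
    (hp1 : 1 ≤ p) (hp2 : p < n / α) (hlam : lam = n - α * p) :
    ∃ C > (0 : ℝ), ∀ (f : EuclideanSpace ℝ (Fin n) → ℝ) (M : ℝ),
      (∀ (x₀ : EuclideanSpace ℝ (Fin n)) (r : ℝ), 0 < r →
        IntegrableOn (fun y => |f y| ^ p) (ball x₀ r) volume ∧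
        (volume (ball x₀ r)).toReal ^ (-(lam / (p * n))) *
          (∫ y in ball x₀ r, |f y| ^ p) ^ (1 / p) ≤ M) →
      ∀ (x₀ : EuclideanSpace ℝ (Fin n)) (r : ℝ), 0 < r →
        (volume (ball x₀ r)).toReal⁻¹ *
            ∫ x in ball x₀ r, ∫ y in ball x₀ (2 * r),
              |f y| / ‖x - y‖ ^ ((n : ℝ) - α) ≤ C * M := by
  have hn0 : (0:ℝ) < n := by exact_mod_cast Nat.pos_of_ne_zero (by omega)
  have hp0 : (0:ℝ) < p := lt_of_lt_of_le one_pos hp1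
  haveI : Nontrivial (EuclideanSpace ℝ (Fin n)) := Module.nontrivial_of_finrank_pos (R := ℝ)
    (by rw [finrank_euclideanSpace_fin]; omega)
  set K := volume (ball (0 : EuclideanSpace ℝ (Fin n)) 1) with hKdef
  have hKpos : 0 < K := measure_ball_pos _ _ one_pos
  have hKfin : K ≠ ⊤ := measure_ball_lt_top.ne
  set κ := K.toReal with hκdef
  have hκpos : 0 < κ := ENNReal.toReal_pos hKpos.ne' hKfin
  have h2αlt : ENNReal.ofReal ((2:ℝ) ^ (-α)) < 1 :=
    ENNReal.ofReal_lt_one.mpr (Real.rpow_lt_one_of_one_lt_of_neg one_lt_two (neg_neg_of_pos hα))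
  have hsub_ne : (1 - ENNReal.ofReal ((2:ℝ) ^ (-α))) ≠ 0 := by
    rw [Ne, tsub_eq_zero_iff_le]
    exact not_le.mpr h2αlt
  have hβfin : (1 - ENNReal.ofReal ((2:ℝ) ^ (-α)))⁻¹ ≠ ⊤ := ENNReal.inv_ne_top.mpr hsub_ne
  set β := ((1 - ENNReal.ofReal ((2:ℝ) ^ (-α)))⁻¹).toReal with hβdef
  have hβpos : 0 < β := by
    refine ENNReal.toReal_pos (ENNReal.inv_ne_zero.mpr ?_) hβfin
    exact (lt_of_le_of_lt tsub_le_self ENNReal.one_lt_top).ne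
  refine ⟨3^α * 2^((n:ℝ)-α) * 2^((n:ℝ)-α) * β * κ ^ (1 - α/(n:ℝ)), by positivity, ?_⟩
  intro f M hyp x₀ r hr
  have h2r : (0:ℝ) < 2*r := by linarith
  obtain ⟨hint2, hbound2⟩ := hyp x₀ (2*r) h2r
  set B := ball x₀ r with hBdef
  set B2 := ball x₀ (2*r) with hB2def
  set I2 := ∫ y in B2, |f y| ^ p with hI2def
  have hI2nn : 0 ≤ I2 := integral_nonneg fun y => Real.rpow_nonneg (abs_nonneg _) _
  have hM : 0 ≤ M := by
    refine le_trans ?_ hbound2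
    exact mul_nonneg (Real.rpow_nonneg ENNReal.toReal_nonneg _) (Real.rpow_nonneg hI2nn _)
  -- measurability
  have hfp_meas : AEMeasurable (fun y => |f y| ^ p) (volume.restrict B2) :=
    hint2.aemeasurable
  have habs : AEMeasurable (fun y => |f y|) (volume.restrict B2) := by
    have h1 : AEMeasurable (fun y => (|f y| ^ p) ^ (1/p)) (volume.restrict B2) :=
      hfp_meas.pow aemeasurable_const
    have heq : (fun y => (|f y| ^ p) ^ (1/p)) = fun y => |f y| := by
      funext y
      rw [← Real.rpow_mul (abs_nonneg _), mul_one_div_cancel hp0.ne', Real.rpow_one]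
    rwa [heq] at h1
  have hg_meas : AEMeasurable (fun y => ENNReal.ofReal |f y|) (volume.restrict B2) :=
    ENNReal.measurable_ofReal.comp_aemeasurable habs
  have hker_meas : Measurable (fun z : EuclideanSpace ℝ (Fin n) × EuclideanSpace ℝ (Fin n) =>
      ENNReal.ofReal (‖z.1 - z.2‖ ^ (α - (n:ℝ)))) :=
    (((continuous_fst.sub continuous_snd).norm.measurable).pow measurable_const).ennreal_ofReal
  have hprod : AEMeasurable (Function.uncurry fun x y =>
      ENNReal.ofReal |f y| * ENNReal.ofReal (‖x - y‖ ^ (α - (n:ℝ))))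
      ((volume.restrict B).prod (volume.restrict B2)) := by
    exact (hg_meas.comp_snd).mul hker_meas.aemeasurable
  -- rewrite the integrand
  have hdivmul : ∀ (x y : EuclideanSpace ℝ (Fin n)),
      |f y| / ‖x - y‖ ^ ((n:ℝ) - α) = |f y| * ‖x - y‖ ^ (α - (n:ℝ)) := by
    intro x y
    rw [show α - (n:ℝ) = -((n:ℝ) - α) by ring, Real.rpow_neg (norm_nonneg _), div_eq_mul_inv]
  simp only [hdivmul]
  set T := ∫⁻ x in B, ∫⁻ y in B2,
      ENNReal.ofReal |f y| * ENNReal.ofReal (‖x - y‖ ^ (α - (n:ℝ))) ∂volume ∂volume with hTdef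
  -- step 1 : real double integral is below lintegral T
  have hstep1 : ∫⁻ x in B, ENNReal.ofReal
      (∫ y in B2, |f y| * ‖x - y‖ ^ (α - (n:ℝ))) ∂volume ≤ T := by
    refine lintegral_mono fun x => ?_
    calc ENNReal.ofReal (∫ y in B2, |f y| * ‖x - y‖ ^ (α - (n:ℝ)))
        ≤ ENNReal.ofReal ((∫⁻ y in B2,
            ENNReal.ofReal (|f y| * ‖x - y‖ ^ (α - (n:ℝ))) ∂volume).toReal) :=
          ENNReal.ofReal_le_ofReal (aux_int_le _ _
            fun y => mul_nonneg (abs_nonneg _) (Real.rpow_nonneg (norm_nonneg _) _))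
      _ ≤ ∫⁻ y in B2, ENNReal.ofReal (|f y| * ‖x - y‖ ^ (α - (n:ℝ))) ∂volume :=
          ENNReal.ofReal_toReal_le
      _ = ∫⁻ y in B2, ENNReal.ofReal |f y| * ENNReal.ofReal (‖x - y‖ ^ (α - (n:ℝ))) ∂volume :=
          lintegral_congr fun y => ENNReal.ofReal_mul (abs_nonneg _)
  -- kernel constant
  set cK : ENNReal := ENNReal.ofReal ((3*r) ^ α * 2 ^ ((n:ℝ) - α))
      * (1 - ENNReal.ofReal ((2:ℝ) ^ (-α)))⁻¹ * K with hcKdef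
  have hcK_ne : cK ≠ ⊤ :=
    ENNReal.mul_ne_top (ENNReal.mul_ne_top ENNReal.ofReal_ne_top hβfin) hKfin
  -- step 2 : Tonelli + kernel estimate
  have hstep2 : T ≤ cK * ∫⁻ y in B2, ENNReal.ofReal |f y| ∂volume := by
    calc T = ∫⁻ y in B2, ∫⁻ x in B,
          ENNReal.ofReal |f y| * ENNReal.ofReal (‖x - y‖ ^ (α - (n:ℝ))) ∂volume ∂volume :=
        lintegral_lintegral_swap hprod
      _ = ∫⁻ y in B2, ENNReal.ofReal |f y|
            * ∫⁻ x in B, ENNReal.ofReal (‖x - y‖ ^ (α - (n:ℝ))) ∂volume ∂volume :=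
        lintegral_congr fun y => lintegral_const_mul' _ _ ENNReal.ofReal_ne_top
      _ ≤ ∫⁻ y in B2, ENNReal.ofReal |f y| * cK ∂volume := by
        refine setLIntegral_mono' measurableSet_ball fun y hy => ?_
        have hsub : B ⊆ ball y (3*r) := by
          refine ball_subset_ball' ?_
          have : dist x₀ y < 2*r := by rw [dist_comm]; exact mem_ball.mp hy
          linarith
        have hker : ∫⁻ x in B, ENNReal.ofReal (‖x - y‖ ^ (α - (n:ℝ))) ∂volume ≤ cK := by
          refine le_trans (lintegral_mono_set hsub) ?_
          exact aux_kernel n hn α hα hαn y (3*r) (by linarith)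
        exact mul_le_mul_right hker _
      _ = cK * ∫⁻ y in B2, ENNReal.ofReal |f y| ∂volume := by
          rw [lintegral_mul_const'' _ hg_meas, mul_comm]
  -- Hölder inequality (L¹ vs Lᵖ on the finite measure ball)
  have hHolder : ∫⁻ y in B2, ENNReal.ofReal |f y| ∂volume ≤
      ENNReal.ofReal (I2 ^ (1/p)) * (volume B2) ^ (1 - 1/p) := by
    have hgsm : AEStronglyMeasurable (fun y => |f y|) (volume.restrict B2) :=
      habs.aestronglyMeasurable
    have h := eLpNorm_le_eLpNorm_mul_rpow_measure_univ (μ := volume.restrict B2)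
      (f := fun y => |f y|) (ENNReal.one_le_ofReal.mpr hp1) hgsm
    rw [eLpNorm_one_eq_lintegral_enorm,
      eLpNorm_eq_lintegral_rpow_enorm_toReal (ENNReal.ofReal_pos.mpr hp0).ne'
        ENNReal.ofReal_ne_top, Measure.restrict_apply_univ] at h
    simp only [ENNReal.toReal_ofReal hp0.le, ENNReal.toReal_one, one_div_one] at h
    have hcoe : ∀ y : EuclideanSpace ℝ (Fin n),
        ‖(|f y|)‖ₑ = ENNReal.ofReal |f y| := by
      intro y
      rw [enorm_eq_ofReal_abs, abs_abs]
    simp only [hcoe] at h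
    have hpow : ∀ y : EuclideanSpace ℝ (Fin n),
        (ENNReal.ofReal |f y|) ^ p = ENNReal.ofReal (|f y| ^ p) := fun y =>
      ENNReal.ofReal_rpow_of_nonneg (abs_nonneg _) hp0.le
    simp only [hpow] at h
    rw [← ofReal_integral_eq_lintegral_ofReal hint2
      (ae_of_all _ fun y => Real.rpow_nonneg (abs_nonneg _) _), ← hI2def,
      ENNReal.ofReal_rpow_of_nonneg hI2nn (by positivity)] at h
    exact h
  -- the Morrey bound from the hypothesis
  set v2 := (volume B2).toReal with hv2def
  have hv2pos : 0 < v2 := ENNReal.toReal_pos (measure_ball_pos _ _ h2r).ne'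
    measure_ball_lt_top.ne
  have hI2b : I2 ^ (1/p) ≤ M * v2 ^ (lam/(p*(n:ℝ))) := by
    calc I2 ^ (1/p)
        = (v2 ^ (-(lam/(p*(n:ℝ)))))⁻¹ * (v2 ^ (-(lam/(p*(n:ℝ)))) * I2 ^ (1/p)) := by
          rw [← mul_assoc, inv_mul_cancel₀ (Real.rpow_pos_of_pos hv2pos _).ne', one_mul]
      _ ≤ (v2 ^ (-(lam/(p*(n:ℝ)))))⁻¹ * M := by
          refine mul_le_mul_of_nonneg_left ?_ (by positivity)
          exact hbound2
      _ = M * v2 ^ (lam/(p*(n:ℝ))) := by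
          rw [Real.rpow_neg hv2pos.le, inv_inv, mul_comm]
  -- the total ENNReal bound
  set Φ : ENNReal := cK * ENNReal.ofReal (M * v2 ^ (lam/(p*(n:ℝ))))
      * (volume B2) ^ (1 - 1/p) with hΦdef
  have hexp2 : (0:ℝ) ≤ 1 - 1/p := by
    rw [sub_nonneg, div_le_one hp0]; exact hp1
  have hΦ_ne : Φ ≠ ⊤ :=
    ENNReal.mul_ne_top (ENNReal.mul_ne_top hcK_ne ENNReal.ofReal_ne_top)
      (ENNReal.rpow_ne_top_of_nonneg hexp2 measure_ball_lt_top.ne)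
  have hTΦ : T ≤ Φ := by
    refine le_trans hstep2 ?_
    calc cK * ∫⁻ y in B2, ENNReal.ofReal |f y| ∂volume
        ≤ cK * (ENNReal.ofReal (I2 ^ (1/p)) * (volume B2) ^ (1 - 1/p)) :=
          mul_le_mul_right hHolder _
      _ ≤ cK * (ENNReal.ofReal (M * v2 ^ (lam/(p*(n:ℝ)))) * (volume B2) ^ (1 - 1/p)) :=
          mul_le_mul_right (mul_le_mul_left (ENNReal.ofReal_le_ofReal hI2b) _) _
      _ = Φ := by rw [hΦdef]; ring
  have hmain : ∫ x in B, ∫ y in B2, |f y| * ‖x - y‖ ^ (α - (n:ℝ)) ≤ Φ.toReal := by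
    refine le_trans (aux_int_le _ _ fun x => integral_nonneg fun y =>
      mul_nonneg (abs_nonneg _) (Real.rpow_nonneg (norm_nonneg _) _)) ?_
    exact ENNReal.toReal_mono hΦ_ne (le_trans hstep1 hTΦ)
  -- compute the various toReal values
  have hv1 : (volume B).toReal = r ^ ((n:ℕ):ℝ) * κ := by
    rw [hBdef, Measure.addHaar_ball _ _ hr.le, finrank_euclideanSpace_fin,
      ENNReal.toReal_mul, ENNReal.toReal_ofReal (by positivity), ← Real.rpow_natCast, ← hκdef]
  have hv2' : v2 = (2*r) ^ ((n:ℕ):ℝ) * κ := by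
    rw [hv2def, hB2def, Measure.addHaar_ball _ _ h2r.le, finrank_euclideanSpace_fin,
      ENNReal.toReal_mul, ENNReal.toReal_ofReal (by positivity), ← Real.rpow_natCast, ← hκdef]
  have hΦtoReal : Φ.toReal = ((3*r) ^ α * 2 ^ ((n:ℝ)-α)) * β * κ
      * (M * v2 ^ (lam/(p*(n:ℝ)))) * v2 ^ (1 - 1/p) := by
    rw [hΦdef, hcKdef]
    simp only [ENNReal.toReal_mul]
    rw [ENNReal.toReal_ofReal (show (0:ℝ) ≤ (3*r) ^ α * 2 ^ ((n:ℝ)-α) by positivity),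
      ENNReal.toReal_ofReal (mul_nonneg hM (Real.rpow_nonneg hv2pos.le _)),
      ← ENNReal.toReal_rpow, ← hβdef, ← hκdef, ← hv2def]
  -- the exponent identity
  have he : lam/(p*(n:ℝ)) + (1 - 1/p) = 1 - α/(n:ℝ) := by
    rw [hlam]; field_simp; ring
  have hv2pow : v2 ^ (lam/(p*(n:ℝ))) * v2 ^ (1 - 1/p)
      = 2 ^ ((n:ℝ)-α) * r ^ ((n:ℝ)-α) * κ ^ (1 - α/(n:ℝ)) := by
    rw [← Real.rpow_add hv2pos, he, hv2',
      Real.mul_rpow (by positivity) hκpos.le,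
      ← Real.rpow_mul (by positivity : (0:ℝ) ≤ 2*r),
      show ((n:ℕ):ℝ) * (1 - α/(n:ℝ)) = (n:ℝ) - α from by field_simp,
      Real.mul_rpow (by norm_num) hr.le]
  have hsplit3 : (3*r) ^ α = 3 ^ α * r ^ α := Real.mul_rpow (by norm_num) hr.le
  have hrr : r ^ α * r ^ ((n:ℝ)-α) = r ^ ((n:ℕ):ℝ) := by
    rw [← Real.rpow_add hr]
    congr 1
    push_cast
    ring
  calc (volume B).toReal⁻¹ * ∫ x in B, ∫ y in B2, |f y| * ‖x - y‖ ^ (α - (n:ℝ))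
      ≤ (volume B).toReal⁻¹ * Φ.toReal :=
        mul_le_mul_of_nonneg_left hmain (inv_nonneg.mpr ENNReal.toReal_nonneg)
    _ = 3 ^ α * 2 ^ ((n:ℝ)-α) * 2 ^ ((n:ℝ)-α) * β * κ ^ (1 - α/(n:ℝ)) * M := by
        rw [hΦtoReal, hv1, hsplit3, inv_mul_eq_div,
          div_eq_iff (by positivity : (r ^ ((n:ℕ):ℝ) * κ) ≠ 0)]
        linear_combination (3 ^ α * r ^ α * 2 ^ ((n:ℝ)-α) * β * κ * M) * hv2pow
          + (3 ^ α * 2 ^ ((n:ℝ)-α) * 2 ^ ((n:ℝ)-α) * β * κ ^ (1 - α/(n:ℝ)) * κ * M) * hrr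
end

section
/- Let 1 ≤ p < ∞, 0 < λ < n, and f a locally p-integrable function on ℝⁿ. Suppose the quantity η(r) := sup_{x₀} m(B(x₀,r))^{-λ/(pn)} (∫_{B(x₀,r)} |f|^p)^{1/p} satisfies that s ↦ ‖f‖_{L^p(B(x₀,s))} is increasing in s for each x₀ (which is automatic). Then for any r > 0 and any β > 0, r^β ∫_{2r}^∞ ‖f‖_{L^p(B(x₀,s))} s^{-(λ/p + β + 1)} ds ≤ C ∫_1^∞ η(2rτ) τ^{-(β+1)} dτ, and if f ∈ VM^{p,λ}(ℝⁿ) then this quantity tends to 0 as r → 0⁺, uniformly in x₀. -/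
open MeasureTheory Set Real Metric Filter
open scoped ENNReal Topology

private lemma lint_mono_on {α : Type*} [MeasurableSpace α] {μ : Measure α} {s : Set α}
    (hs : MeasurableSet s) {f g : α → ℝ≥0∞} (h : ∀ x ∈ s, f x ≤ g x) :
    ∫⁻ x in s, f x ∂μ ≤ ∫⁻ x in s, g x ∂μ := by
  rw [← lintegral_indicator hs f, ← lintegral_indicator hs g]
  refine lintegral_mono fun x => ?_
  by_cases hx : x ∈ s
  · simpa [Set.indicator_of_mem hx] using h x hx
  · simp [Set.indicator_of_notMem hx]

private lemma lint_congr_on {α : Type*} [MeasurableSpace α] {μ : Measure α} {s : Set α}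
    (hs : MeasurableSet s) {f g : α → ℝ≥0∞} (h : ∀ x ∈ s, f x = g x) :
    ∫⁻ x in s, f x ∂μ = ∫⁻ x in s, g x ∂μ :=
  le_antisymm (lint_mono_on hs fun x hx => (h x hx).le)
    (lint_mono_on hs fun x hx => (h x hx).ge)

private lemma lint_subst {c : ℝ} (hc : 0 < c) (g : ℝ → ℝ≥0∞) :
    ∫⁻ s in Ioi c, g s = ENNReal.ofReal c * ∫⁻ τ in Ioi (1 : ℝ), g (c * τ) := by
  have hmap : Measure.map (c * ·) volume = ENNReal.ofReal |c⁻¹| • volume :=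
    Real.map_volume_mul_left hc.ne'
  have hvol : (volume : Measure ℝ) = ENNReal.ofReal c • Measure.map (c * ·) volume := by
    rw [hmap, smul_smul, ← ENNReal.ofReal_mul hc.le, abs_of_pos (inv_pos.2 hc),
      mul_inv_cancel₀ hc.ne', ENNReal.ofReal_one, one_smul]
  have hequiv : Measure.map (c * ·) (volume : Measure ℝ) =
      Measure.map ((Homeomorph.mulLeft₀ c hc.ne').toMeasurableEquiv) volume := rfl
  calc ∫⁻ s in Ioi c, g s = ∫⁻ s, (Ioi c).indicator g s ∂volume :=
        (lintegral_indicator measurableSet_Ioi g).symm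
    _ = ENNReal.ofReal c * ∫⁻ s, (Ioi c).indicator g s ∂(Measure.map (c * ·) volume) := by
        conv_lhs => rw [hvol]
        rw [lintegral_smul_measure, smul_eq_mul]
    _ = ENNReal.ofReal c * ∫⁻ τ, (Ioi c).indicator g (c * τ) ∂volume := by
        rw [hequiv, lintegral_map_equiv]
        rfl
    _ = ENNReal.ofReal c * ∫⁻ τ, (Ioi (1 : ℝ)).indicator (fun τ => g (c * τ)) τ ∂volume := by
        congr 1
        refine lintegral_congr fun τ => ?_
        have hmem : c * τ ∈ Ioi c ↔ τ ∈ Ioi (1 : ℝ) := by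
          simp only [mem_Ioi]
          constructor
          · intro h; nlinarith
          · intro h; nlinarith
        by_cases hτ : τ ∈ Ioi (1 : ℝ)
        · rw [Set.indicator_of_mem (hmem.2 hτ), Set.indicator_of_mem hτ]
        · rw [Set.indicator_of_notMem (fun h => hτ (hmem.1 h)), Set.indicator_of_notMem hτ]
    _ = ENNReal.ofReal c * ∫⁻ τ in Ioi (1 : ℝ), g (c * τ) := by
        rw [lintegral_indicator measurableSet_Ioi]

private lemma lint_tail {β c : ℝ} (hβ : 0 < β) (hc : 0 < c) :
    ∫⁻ τ in Ioi c, ENNReal.ofReal (τ ^ (-(β + 1))) = ENNReal.ofReal (c ^ (-β) / β) := by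
  rw [← ofReal_integral_eq_lintegral_ofReal
      (integrableOn_Ioi_rpow_of_lt (by linarith) hc)
      ((ae_restrict_iff' measurableSet_Ioi).2 (ae_of_all _ fun x hx =>
        Real.rpow_nonneg (le_of_lt (hc.trans hx)) _))]
  rw [integral_Ioi_rpow_of_lt (by linarith) hc]
  rw [show -(β + 1) + 1 = -β by ring, neg_div, div_neg, neg_neg]

theorem stmt_13 (n : ℕ) (hn : 1 ≤ n) (p lam : ℝ) (hp : 1 ≤ p) (hlam0 : 0 < lam)
    (hlamn : lam < n) (f : EuclideanSpace ℝ (Fin n) → ℝ)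
    (hfloc : ∀ (x₀ : EuclideanSpace ℝ (Fin n)) (r : ℝ), 0 < r →
      IntegrableOn (fun x => |f x| ^ p) (ball x₀ r) volume)
    -- the VMO-type modulus `η`
    (η : ℝ → ℝ≥0∞)
    (hη : ∀ s : ℝ, η s = ⨆ x₀ : EuclideanSpace ℝ (Fin n),
      (volume (ball x₀ s)) ^ (-(lam / (p * n))) *
        (∫⁻ x in ball x₀ s, ENNReal.ofReal (|f x| ^ p)) ^ (1 / p)) :
    (∃ C : ℝ≥0∞, 0 < C ∧ C < ⊤ ∧
      ∀ (x₀ : EuclideanSpace ℝ (Fin n)) (r β : ℝ), 0 < r → 0 < β →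
        ENNReal.ofReal (r ^ β) *
            ∫⁻ s in Ioi (2 * r),
              (∫⁻ y in ball x₀ s, ENNReal.ofReal (|f y| ^ p)) ^ (1 / p) *
                ENNReal.ofReal (s ^ (-(lam / p + β + 1))) ≤
          C * ∫⁻ τ in Ioi (1 : ℝ), η (2 * r * τ) * ENNReal.ofReal (τ ^ (-(β + 1)))) ∧
    ((∃ M : ℝ≥0∞, M < ⊤ ∧ ∀ s > (0 : ℝ), η s ≤ M) →
      Tendsto η (nhdsWithin 0 (Ioi 0)) (nhds 0) →
      ∀ β > (0 : ℝ),
        Tendsto (fun r : ℝ => ⨆ x₀ : EuclideanSpace ℝ (Fin n),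
            ENNReal.ofReal (r ^ β) *
              ∫⁻ s in Ioi (2 * r),
                (∫⁻ y in ball x₀ s, ENNReal.ofReal (|f y| ^ p)) ^ (1 / p) *
                  ENNReal.ofReal (s ^ (-(lam / p + β + 1))))
          (nhdsWithin 0 (Ioi 0)) (nhds 0)) := by
  have hp0 : (0 : ℝ) < p := lt_of_lt_of_le one_pos hp
  have hn0 : (0 : ℝ) < (n : ℝ) := by exact_mod_cast hn
  set B : ℝ≥0∞ := volume (ball (0 : EuclideanSpace ℝ (Fin n)) 1) with hBdef
  have hB0 : B ≠ 0 := (measure_ball_pos volume (0 : EuclideanSpace ℝ (Fin n)) one_pos).ne'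
  have hBt : B ≠ ⊤ := measure_ball_lt_top.ne
  set a : ℝ := lam / (p * n) with hadef
  have ha : 0 ≤ a := by positivity
  have hna : (n : ℝ) * a = lam / p := by
    field_simp [hadef]
    rw [hadef]; field_simp [hn0.ne', hp0.ne']
  set C₀ : ℝ≥0∞ := B ^ a with hC0def
  have hC0pos : 0 < C₀ := ENNReal.rpow_pos (hB0.bot_lt) hBt
  have hC0t : C₀ < ⊤ := ENNReal.rpow_lt_top_of_nonneg ha hBt
  -- volume of balls
  have hvol : ∀ (x₀ : EuclideanSpace ℝ (Fin n)) (s : ℝ), 0 < s →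
      volume (ball x₀ s) = ENNReal.ofReal (s ^ ((n : ℝ))) * B := by
    intro x₀ s hs
    rw [Measure.addHaar_ball_of_pos volume x₀ hs, finrank_euclideanSpace_fin, Real.rpow_natCast]
  -- key pointwise bound
  have hkey : ∀ (x₀ : EuclideanSpace ℝ (Fin n)) (s : ℝ), 0 < s →
      (∫⁻ y in ball x₀ s, ENNReal.ofReal (|f y| ^ p)) ^ (1 / p) ≤
        C₀ * (ENNReal.ofReal (s ^ (lam / p)) * η s) := by
    intro x₀ s hs
    set v : ℝ≥0∞ := volume (ball x₀ s) with hvdef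
    set I : ℝ≥0∞ := (∫⁻ y in ball x₀ s, ENNReal.ofReal (|f y| ^ p)) ^ (1 / p) with hIdef
    have hv0 : v ≠ 0 := (measure_ball_pos volume x₀ hs).ne'
    have hvt : v ≠ ⊤ := measure_ball_lt_top.ne
    have h1 : v ^ (-a) * I ≤ η s := by
      rw [hη s]
      exact le_iSup (fun y : EuclideanSpace ℝ (Fin n) =>
        (volume (ball y s)) ^ (-a) *
          (∫⁻ x in ball y s, ENNReal.ofReal (|f x| ^ p)) ^ (1 / p)) x₀
    have h2 : I = v ^ a * (v ^ (-a) * I) := by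
      rw [← mul_assoc, ← ENNReal.rpow_add _ _ hv0 hvt]
      simp
    calc I = v ^ a * (v ^ (-a) * I) := h2
      _ ≤ v ^ a * η s := mul_le_mul_right h1 _
      _ = C₀ * (ENNReal.ofReal (s ^ (lam / p)) * η s) := by
          rw [hvdef, hvol x₀ s hs, ENNReal.mul_rpow_of_nonneg _ _ ha,
            ENNReal.ofReal_rpow_of_pos (Real.rpow_pos_of_pos hs _),
            ← Real.rpow_mul hs.le, hna]
          ring
  -- main inequality
  have hmain : ∀ (x₀ : EuclideanSpace ℝ (Fin n)) (r β : ℝ), 0 < r → 0 < β →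
      ENNReal.ofReal (r ^ β) *
          ∫⁻ s in Ioi (2 * r),
            (∫⁻ y in ball x₀ s, ENNReal.ofReal (|f y| ^ p)) ^ (1 / p) *
              ENNReal.ofReal (s ^ (-(lam / p + β + 1))) ≤
        C₀ * ∫⁻ τ in Ioi (1 : ℝ), η (2 * r * τ) * ENNReal.ofReal (τ ^ (-(β + 1))) := by
    intro x₀ r β hr hβ
    have h2r : (0 : ℝ) < 2 * r := by linarith
    set J : ℝ≥0∞ := ∫⁻ τ in Ioi (1 : ℝ), η (2 * r * τ) * ENNReal.ofReal (τ ^ (-(β + 1)))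
      with hJdef
    have step1 : ∫⁻ s in Ioi (2 * r),
        (∫⁻ y in ball x₀ s, ENNReal.ofReal (|f y| ^ p)) ^ (1 / p) *
          ENNReal.ofReal (s ^ (-(lam / p + β + 1))) ≤
        ∫⁻ s in Ioi (2 * r), C₀ * (η s * ENNReal.ofReal (s ^ (-(β + 1)))) := by
      refine lint_mono_on measurableSet_Ioi fun s hs => ?_
      have hs0 : (0 : ℝ) < s := lt_trans h2r hs
      have hmul : ENNReal.ofReal (s ^ (lam / p)) * ENNReal.ofReal (s ^ (-(lam / p + β + 1))) =
          ENNReal.ofReal (s ^ (-(β + 1))) := by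
        rw [← ENNReal.ofReal_mul (Real.rpow_nonneg hs0.le _), ← Real.rpow_add hs0,
          show lam / p + -(lam / p + β + 1) = -(β + 1) by ring]
      calc (∫⁻ y in ball x₀ s, ENNReal.ofReal (|f y| ^ p)) ^ (1 / p) *
            ENNReal.ofReal (s ^ (-(lam / p + β + 1)))
          ≤ (C₀ * (ENNReal.ofReal (s ^ (lam / p)) * η s)) *
            ENNReal.ofReal (s ^ (-(lam / p + β + 1))) :=
            mul_le_mul_left (hkey x₀ s hs0) _
        _ = C₀ * (η s * (ENNReal.ofReal (s ^ (lam / p)) *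
            ENNReal.ofReal (s ^ (-(lam / p + β + 1))))) := by ring
        _ = C₀ * (η s * ENNReal.ofReal (s ^ (-(β + 1)))) := by rw [hmul]
    have step2 : ∫⁻ s in Ioi (2 * r), C₀ * (η s * ENNReal.ofReal (s ^ (-(β + 1)))) =
        C₀ * ∫⁻ s in Ioi (2 * r), η s * ENNReal.ofReal (s ^ (-(β + 1))) :=
      lintegral_const_mul' C₀ _ hC0t.ne
    have step3 : ∫⁻ s in Ioi (2 * r), η s * ENNReal.ofReal (s ^ (-(β + 1))) =
        ENNReal.ofReal (2 * r) *
          ∫⁻ τ in Ioi (1 : ℝ), η (2 * r * τ) * ENNReal.ofReal ((2 * r * τ) ^ (-(β + 1))) :=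
      lint_subst h2r (fun s => η s * ENNReal.ofReal (s ^ (-(β + 1))))
    have step4 : ∫⁻ τ in Ioi (1 : ℝ), η (2 * r * τ) * ENNReal.ofReal ((2 * r * τ) ^ (-(β + 1))) =
        ENNReal.ofReal ((2 * r) ^ (-(β + 1))) * J := by
      rw [hJdef, ← lintegral_const_mul' _ _ ENNReal.ofReal_ne_top]
      refine lint_congr_on measurableSet_Ioi fun τ hτ => ?_
      have hτ0 : (0 : ℝ) < τ := lt_trans one_pos hτ
      rw [Real.mul_rpow h2r.le hτ0.le, ENNReal.ofReal_mul (Real.rpow_nonneg h2r.le _)]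
      ring
    have hscal : ENNReal.ofReal (r ^ β) * (ENNReal.ofReal (2 * r) *
        ENNReal.ofReal ((2 * r) ^ (-(β + 1)))) ≤ 1 := by
      rw [← ENNReal.ofReal_mul (by positivity : (0:ℝ) ≤ 2 * r),
        ← ENNReal.ofReal_mul (by positivity : (0:ℝ) ≤ r ^ β)]
      have e1 : (2 * r) * (2 * r) ^ (-(β + 1)) = (2 * r) ^ (-β) := by
        nth_rewrite 1 [← Real.rpow_one (2 * r)]
        rw [← Real.rpow_add h2r, show (1 : ℝ) + -(β + 1) = -β by ring]
      have e2 : r ^ β * (2 * r) ^ (-β) = 2 ^ (-β) := by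
        rw [Real.mul_rpow (by norm_num) hr.le, ← mul_assoc, mul_comm (r ^ β),
          mul_assoc, ← Real.rpow_add hr, show β + -β = 0 by ring, Real.rpow_zero, mul_one]
      rw [e1, e2]
      exact ENNReal.ofReal_le_one.2
        (Real.rpow_le_one_of_one_le_of_nonpos one_le_two (by linarith))
    calc ENNReal.ofReal (r ^ β) *
          ∫⁻ s in Ioi (2 * r),
            (∫⁻ y in ball x₀ s, ENNReal.ofReal (|f y| ^ p)) ^ (1 / p) *
              ENNReal.ofReal (s ^ (-(lam / p + β + 1)))
        ≤ ENNReal.ofReal (r ^ β) *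
          (C₀ * (ENNReal.ofReal (2 * r) * (ENNReal.ofReal ((2 * r) ^ (-(β + 1))) * J))) := by
          refine mul_le_mul_right ?_ _
          rw [step2, step3, step4] at step1
          exact step1
      _ = (ENNReal.ofReal (r ^ β) * (ENNReal.ofReal (2 * r) *
          ENNReal.ofReal ((2 * r) ^ (-(β + 1))))) * (C₀ * J) := by ring
      _ ≤ 1 * (C₀ * J) := mul_le_mul_left hscal _
      _ = C₀ * J := one_mul _
  refine ⟨⟨C₀, hC0pos, hC0t, fun x₀ r β hr hβ => hmain x₀ r β hr hβ⟩, ?_⟩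
  -- part 2
  rintro ⟨M, hMt, hMb⟩ htend β hβ
  rw [ENNReal.tendsto_nhds_zero]
  intro ε hε
  have hK : ∫⁻ τ in Ioi (1 : ℝ), ENNReal.ofReal (τ ^ (-(β + 1))) = ENNReal.ofReal (1 / β) := by
    rw [lint_tail hβ one_pos, Real.one_rpow]
  set K : ℝ≥0∞ := ENNReal.ofReal (1 / β) with hKdef
  have hKt : K ≠ ⊤ := ENNReal.ofReal_ne_top
  have hK0 : K ≠ 0 := (ENNReal.ofReal_pos.2 (by positivity)).ne'
  have hCK0 : C₀ * K ≠ 0 := mul_ne_zero hC0pos.ne' hK0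
  have hCKt : C₀ * K ≠ ⊤ := ENNReal.mul_ne_top hC0t.ne hKt
  set κ : ℝ≥0∞ := (ε / 2) / (C₀ * K) with hκdef
  have hε2 : (0 : ℝ≥0∞) < ε / 2 := ENNReal.div_pos hε.ne' (by norm_num)
  have hκ0 : 0 < κ := ENNReal.div_pos hε2.ne' hCKt
  -- get ρ from htend
  have hev : {s : ℝ | η s ≤ κ} ∈ nhdsWithin 0 (Ioi 0) :=
    (ENNReal.tendsto_nhds_zero.1 htend) κ hκ0
  rw [Metric.mem_nhdsWithin_iff] at hev
  obtain ⟨ρ, hρ0, hρ⟩ := hev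
  have hηκ : ∀ s : ℝ, 0 < s → s < ρ → η s ≤ κ := fun s h1 h2 =>
    hρ ⟨by simpa [Real.dist_eq, abs_of_pos h1] using h2, h1⟩
  -- get T
  have htail : Tendsto (fun T : ℝ => C₀ * (M * ENNReal.ofReal (T ^ (-β) / β)))
      atTop (𝓝 0) := by
    have h1 : Tendsto (fun T : ℝ => T ^ (-β) / β) atTop (𝓝 (0 / β)) :=
      (tendsto_rpow_neg_atTop hβ).div_const β
    rw [zero_div] at h1
    have h2 := ENNReal.tendsto_ofReal h1
    rw [ENNReal.ofReal_zero] at h2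
    have h3 := ENNReal.Tendsto.const_mul h2 (Or.inr hMt.ne)
    rw [mul_zero] at h3
    have h4 := ENNReal.Tendsto.const_mul h3 (Or.inr hC0t.ne)
    rw [mul_zero] at h4
    exact h4
  obtain ⟨T, hTsmall, hT1⟩ : ∃ T : ℝ,
      C₀ * (M * ENNReal.ofReal (T ^ (-β) / β)) < ε / 2 ∧ 1 ≤ T :=
    ((htail.eventually_lt_const hε2).and (eventually_ge_atTop 1)).exists
  have hT0 : (0 : ℝ) < T := lt_of_lt_of_le one_pos hT1
  -- eventual statement
  have hmem : Ioo (0 : ℝ) (ρ / (2 * T)) ∈ nhdsWithin (0 : ℝ) (Ioi 0) :=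
    Ioo_mem_nhdsGT_of_mem ⟨le_refl 0, by positivity⟩
  filter_upwards [hmem] with r hr
  obtain ⟨hr0, hrρ⟩ := hr
  refine iSup_le fun x₀ => ?_
  have hsplit : ∫⁻ τ in Ioi (1 : ℝ), η (2 * r * τ) * ENNReal.ofReal (τ ^ (-(β + 1))) =
      (∫⁻ τ in Ioc (1 : ℝ) T, η (2 * r * τ) * ENNReal.ofReal (τ ^ (-(β + 1)))) +
      (∫⁻ τ in Ioi T, η (2 * r * τ) * ENNReal.ofReal (τ ^ (-(β + 1)))) := by
    rw [← Ioc_union_Ioi_eq_Ioi hT1,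
      Measure.restrict_union (Ioc_disjoint_Ioi le_rfl) measurableSet_Ioi,
      lintegral_add_measure]
  have hI₁ : ∫⁻ τ in Ioc (1 : ℝ) T, η (2 * r * τ) * ENNReal.ofReal (τ ^ (-(β + 1))) ≤
      κ * K := by
    have hmeas : Measurable fun τ : ℝ => ENNReal.ofReal (τ ^ (-(β + 1))) := by
      fun_prop
    calc ∫⁻ τ in Ioc (1 : ℝ) T, η (2 * r * τ) * ENNReal.ofReal (τ ^ (-(β + 1)))
        ≤ ∫⁻ τ in Ioc (1 : ℝ) T, κ * ENNReal.ofReal (τ ^ (-(β + 1))) := by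
          refine lint_mono_on measurableSet_Ioc fun τ hτ => ?_
          have hτ0 : (0 : ℝ) < τ := lt_trans one_pos hτ.1
          have hpos : (0 : ℝ) < 2 * r * τ := by positivity
          have hlt : 2 * r * τ < ρ := by
            have h1 : r * (2 * T) < ρ := (lt_div_iff₀ (by positivity)).1 hrρ
            nlinarith [hτ.2]
          exact mul_le_mul_left (hηκ _ hpos hlt) _
      _ = κ * ∫⁻ τ in Ioc (1 : ℝ) T, ENNReal.ofReal (τ ^ (-(β + 1))) :=
          lintegral_const_mul κ hmeas
      _ ≤ κ * ∫⁻ τ in Ioi (1 : ℝ), ENNReal.ofReal (τ ^ (-(β + 1))) :=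
          mul_le_mul_right (lintegral_mono_set Ioc_subset_Ioi_self) κ
      _ = κ * K := by rw [hK]
  have hI₂ : ∫⁻ τ in Ioi T, η (2 * r * τ) * ENNReal.ofReal (τ ^ (-(β + 1))) ≤
      M * ENNReal.ofReal (T ^ (-β) / β) := by
    calc ∫⁻ τ in Ioi T, η (2 * r * τ) * ENNReal.ofReal (τ ^ (-(β + 1)))
        ≤ ∫⁻ τ in Ioi T, M * ENNReal.ofReal (τ ^ (-(β + 1))) := by
          refine lint_mono_on measurableSet_Ioi fun τ hτ => ?_
          have hτ0 : (0 : ℝ) < τ := lt_trans hT0 hτ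
          exact mul_le_mul_left (hMb _ (by positivity)) _
      _ = M * ∫⁻ τ in Ioi T, ENNReal.ofReal (τ ^ (-(β + 1))) :=
          lintegral_const_mul' M _ hMt.ne
      _ = M * ENNReal.ofReal (T ^ (-β) / β) := by rw [lint_tail hβ hT0]
  calc ENNReal.ofReal (r ^ β) *
        ∫⁻ s in Ioi (2 * r),
          (∫⁻ y in ball x₀ s, ENNReal.ofReal (|f y| ^ p)) ^ (1 / p) *
            ENNReal.ofReal (s ^ (-(lam / p + β + 1)))
      ≤ C₀ * ∫⁻ τ in Ioi (1 : ℝ), η (2 * r * τ) * ENNReal.ofReal (τ ^ (-(β + 1))) :=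
        hmain x₀ r β hr0 hβ
    _ ≤ C₀ * (κ * K + M * ENNReal.ofReal (T ^ (-β) / β)) := by
        rw [hsplit]
        exact mul_le_mul_right (add_le_add hI₁ hI₂) C₀
    _ = (C₀ * K) * κ + C₀ * (M * ENNReal.ofReal (T ^ (-β) / β)) := by ring
    _ ≤ ε / 2 + ε / 2 := by
        refine add_le_add ?_ hTsmall.le
        rw [hκdef, ENNReal.mul_div_cancel hCK0 hCKt]
    _ = ε := ENNReal.add_halves ε
end
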